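/- Let β ∈ (1/2, 1), C > 0 and 0 < ρ < 2β − 1. Then there exists b₀ > 0, depending only on β, C and ρ, with the following property: for every function ψ : [−1,1] → ℝ satisfying |ψ(τ) − ψ(τ')| ≤ C|τ − τ'|^β for all τ, τ' ∈ [−1,1], every real number b ≥ b₀, and every α ∈ ℝ with |α| ≥ b, one has |∫_{−1}^{1} exp( i b (ψ(τ) + ατ) ) dτ| < b^{−ρ}. -/

import Mathlib

/-!
Oscillatory-integral estimate for β-Hölder phase perturbations of a dominant linear phase:
if `β ∈ (1/2,1)`, `C > 0` and `0 < ρ < 2β − 1`, there is `b₀ > 0` such that for every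
`ψ : [−1,1] → ℝ` that is `β`-Hölder with constant `C`, every `b ≥ b₀` and every `α` with
`|α| ≥ b`, one has `|∫_{−1}^{1} exp(ib(ψ(τ)+ατ)) dτ| < b^{−ρ}`.
-/

open MeasureTheory

noncomputable section

open Complex Filter

lemma aux_abs_exp_I_mul_sub_one_le (x : ℝ) :
    ‖(Complex.exp ((x : ℂ) * Complex.I) - 1)‖ ≤ |x| := by
  have hz : Complex.exp ((x : ℂ) * Complex.I) - 1
      = ((Real.cos x - 1 : ℝ) : ℂ) + ((Real.sin x : ℝ) : ℂ) * Complex.I := by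
    rw [Complex.exp_mul_I, ← Complex.ofReal_cos, ← Complex.ofReal_sin]
    push_cast; ring
  have h2 : (‖(Complex.exp ((x : ℂ) * Complex.I) - 1)‖) ^ 2
      = (Real.cos x - 1) ^ 2 + (Real.sin x) ^ 2 := by
    rw [hz, Complex.sq_norm, Complex.normSq_add_mul_I]
  have hcos : 1 - Real.cos x ≤ x ^ 2 / 2 := by
    rcases eq_or_ne x 0 with rfl | hx
    · simp
    · linarith [Real.one_sub_sq_div_two_lt_cos hx]
  have hfin : (‖(Complex.exp ((x : ℂ) * Complex.I) - 1)‖) ^ 2 ≤ x ^ 2 := by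
    rw [h2]
    nlinarith [Real.sin_sq_add_cos_sq x, Real.neg_one_le_cos x, Real.cos_le_one x]
  calc ‖(Complex.exp ((x : ℂ) * Complex.I) - 1)‖
      = Real.sqrt ((‖(Complex.exp ((x : ℂ) * Complex.I) - 1)‖) ^ 2) :=
        (Real.sqrt_sq (norm_nonneg _)).symm
    _ ≤ Real.sqrt (x ^ 2) := Real.sqrt_le_sqrt hfin
    _ = |x| := Real.sqrt_sq_eq_abs x

lemma aux_abs_exp_I_sub_exp_I (x y : ℝ) :
    ‖(Complex.exp (Complex.I * x) - Complex.exp (Complex.I * y))‖ ≤ |x - y| := by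
  have hsplit : Complex.exp (Complex.I * x) - Complex.exp (Complex.I * y)
      = Complex.exp (Complex.I * y) * (Complex.exp (((x - y : ℝ) : ℂ) * Complex.I) - 1) := by
    rw [mul_sub, mul_one, ← Complex.exp_add]
    congr 2
    push_cast; ring
  rw [hsplit, norm_mul]
  have h1 : ‖(Complex.exp (Complex.I * y))‖ = 1 := by
    rw [Complex.norm_exp]; simp
  rw [h1, one_mul]
  exact aux_abs_exp_I_mul_sub_one_le (x - y)

lemma aux_abs_exp_I_mul_ofReal (b r : ℝ) :
    ‖(Complex.exp (Complex.I * (b : ℂ) * (r : ℂ)))‖ = 1 := by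
  rw [Complex.norm_exp]; simp

lemma aux_holder_contOn {C β : ℝ} (hC : 0 < C) (hβ : 0 < β) {ψ : ℝ → ℝ}
    (hψ : ∀ τ ∈ Set.Icc (-1:ℝ) 1, ∀ τ' ∈ Set.Icc (-1:ℝ) 1,
      |ψ τ - ψ τ'| ≤ C * |τ - τ'| ^ β) :
    ContinuousOn ψ (Set.Icc (-1) 1) := by
  rw [Metric.continuousOn_iff]
  intro x hx ε hε
  refine ⟨(ε / (2 * C)) ^ (1 / β), Real.rpow_pos_of_pos (by positivity) _, fun y hy hxy => ?_⟩
  have h1 : |ψ y - ψ x| ≤ C * |y - x| ^ β := hψ y hy x hx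
  have h2 : |y - x| ^ β < ((ε / (2 * C)) ^ (1 / β)) ^ β :=
    Real.rpow_lt_rpow (abs_nonneg _) (by rwa [Real.dist_eq] at hxy) hβ
  rw [← Real.rpow_mul (by positivity), one_div, inv_mul_cancel₀ hβ.ne', Real.rpow_one] at h2
  rw [Real.dist_eq]
  have h3 : C * |y - x| ^ β < C * (ε / (2 * C)) := by
    exact mul_lt_mul_of_pos_left h2 hC
  have h4 : C * (ε / (2 * C)) = ε / 2 := by field_simp
  calc |ψ y - ψ x| ≤ C * |y - x| ^ β := h1
    _ < C * (ε / (2 * C)) := h3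
    _ = ε / 2 := h4
    _ < ε := by linarith

lemma aux_contOn_exp {u : ℝ → ℝ} {s : Set ℝ} (hu : ContinuousOn u s) (b : ℝ) :
    ContinuousOn (fun τ => Complex.exp (Complex.I * (b : ℂ) * ((u τ : ℝ) : ℂ))) s :=
  Complex.continuous_exp.comp_continuousOn
    (continuousOn_const.mul (Complex.continuous_ofReal.comp_continuousOn hu))


lemma aux_key_bound (β C : ℝ) (hβ0 : (0:ℝ) < β) (hC : 0 < C)
    (ψ : ℝ → ℝ)
    (hψ : ∀ τ ∈ Set.Icc (-1:ℝ) 1, ∀ τ' ∈ Set.Icc (-1:ℝ) 1,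
      |ψ τ - ψ τ'| ≤ C * |τ - τ'| ^ β)
    (b α : ℝ) (hb : 2 ≤ b) (hα : b ≤ α) :
    ‖(∫ τ in (-1:ℝ)..1,
        Complex.exp (Complex.I * (b:ℂ) * ((ψ τ + α * τ : ℝ):ℂ)))‖
      ≤ Real.pi * b ^ (-2:ℝ) + C * Real.pi ^ β * b ^ (1 - 2*β) := by
  have hb0 : (0:ℝ) < b := lt_of_lt_of_le two_pos hb
  have hα0 : (0:ℝ) < α := lt_of_lt_of_le hb0 hα
  have hα2 : (2:ℝ) ≤ α := le_trans hb hα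
  have hc0 : (0:ℝ) < b * α := mul_pos hb0 hα0
  set h : ℝ := Real.pi / (b * α) with hhdef
  have hh0 : 0 < h := div_pos Real.pi_pos hc0
  have hbsq : b ^ (-2:ℝ) = (b^2)⁻¹ := by
    rw [show (-2:ℝ) = -((2:ℕ):ℝ) by norm_num, Real.rpow_neg hb0.le, Real.rpow_natCast]
  have hhb : h ≤ Real.pi * b ^ (-2:ℝ) := by
    rw [hbsq, hhdef, div_eq_mul_inv]
    have hinv : (b * α)⁻¹ ≤ (b^2)⁻¹ := by
      apply inv_anti₀ (by positivity) (by nlinarith)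
    exact mul_le_mul_of_nonneg_left hinv Real.pi_pos.le
  have hh1 : h ≤ 1 := by
    rw [hhdef, div_le_one hc0]
    nlinarith [Real.pi_le_four]
  -- continuity
  have hcψ : ContinuousOn ψ (Set.Icc (-1) 1) := aux_holder_contOn hC hβ0 hψ
  set f : ℝ → ℂ := fun τ => Complex.exp (Complex.I * (b:ℂ) * ((ψ τ + α * τ : ℝ):ℂ)) with hfdef
  set F : ℝ → ℂ := fun τ => Complex.exp (Complex.I * (b:ℂ) * ((ψ (τ - h) + α * τ : ℝ):ℂ)) with hFdef
  have hfc : ContinuousOn f (Set.Icc (-1) 1) :=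
    aux_contOn_exp (hcψ.add (continuous_const.mul continuous_id).continuousOn) b
  have hFc : ContinuousOn F (Set.Icc (-1+h) (1+h)) := by
    apply aux_contOn_exp (ContinuousOn.add ?_ (continuous_const.mul continuous_id).continuousOn) b
    apply hcψ.comp (continuous_sub_right h).continuousOn
    intro x hx
    simp only [Set.mem_Icc] at hx ⊢
    exact ⟨by linarith [hx.1], by linarith [hx.2]⟩
  -- integrability
  have hint : ∀ u v : ℝ, Set.uIcc u v ⊆ Set.Icc (-1) 1 → IntervalIntegrable f volume u v :=
    fun u v huv => ((hfc.mono huv).intervalIntegrable)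
  have hintF : ∀ u v : ℝ, Set.uIcc u v ⊆ Set.Icc (-1+h) (1+h) → IntervalIntegrable F volume u v :=
    fun u v huv => ((hFc.mono huv).intervalIntegrable)
  have hIf1 : IntervalIntegrable f volume (-1) (-1+h) := by
    apply hint; rw [Set.uIcc_of_le (by linarith)]
    apply Set.Icc_subset_Icc le_rfl (by linarith)
  have hIf2 : IntervalIntegrable f volume (-1+h) 1 := by
    apply hint; rw [Set.uIcc_of_le (by linarith)]
    exact Set.Icc_subset_Icc (by linarith) le_rfl
  have hIF2 : IntervalIntegrable F volume (-1+h) 1 := by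
    apply hintF; rw [Set.uIcc_of_le (by linarith)]
    exact Set.Icc_subset_Icc le_rfl (by linarith)
  have hIF3 : IntervalIntegrable F volume 1 (1+h) := by
    apply hintF; rw [Set.uIcc_of_le (by linarith)]
    exact Set.Icc_subset_Icc (by linarith) le_rfl
  -- the shift identity
  have hπ : b * α * h = Real.pi := by rw [hhdef]; field_simp
  have hFf : ∀ τ : ℝ, f (τ - h) = - F τ := by
    intro τ
    have hπc : (b:ℂ) * (α:ℂ) * (h:ℂ) = (Real.pi:ℂ) := by exact_mod_cast congrArg (Complex.ofReal) hπ
    have harg : Complex.I * (b:ℂ) * ((ψ (τ-h) + α * (τ-h) : ℝ):ℂ)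
        = Complex.I * (b:ℂ) * ((ψ (τ-h) + α * τ : ℝ):ℂ) - (Real.pi:ℂ) * Complex.I := by
      push_cast
      linear_combination (-Complex.I) * hπc
    show Complex.exp (Complex.I * (b:ℂ) * ((ψ (τ-h) + α * (τ-h) : ℝ):ℂ)) = - F τ
    rw [harg, Complex.exp_sub, Complex.exp_pi_mul_I, div_neg, div_one]
  -- integral identities
  set I0 : ℂ := ∫ τ in (-1:ℝ)..1, f τ with hI0
  have hsplit1 : (∫ τ in (-1:ℝ)..(-1+h), f τ) + (∫ τ in (-1+h:ℝ)..1, f τ) = I0 :=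
    intervalIntegral.integral_add_adjacent_intervals hIf1 hIf2
  have hshift : (∫ τ in (-1+h:ℝ)..(1+h), F τ) = - I0 := by
    have e1 : (∫ τ in (-1+h:ℝ)..(1+h), F τ) = ∫ τ in (-1+h:ℝ)..(1+h), - f (τ - h) := by
      apply intervalIntegral.integral_congr
      intro x _
      show F x = -f (x - h)
      rw [hFf x, neg_neg]
    rw [e1, intervalIntegral.integral_neg, intervalIntegral.integral_comp_sub_right f h]
    simp only [add_sub_cancel_right, hI0]
  have hsplit2 : (∫ τ in (-1+h:ℝ)..1, F τ) + (∫ τ in (1:ℝ)..(1+h), F τ) = - I0 := by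
    rw [intervalIntegral.integral_add_adjacent_intervals hIF2 hIF3]; exact hshift
  have hdiff : (∫ τ in (-1+h:ℝ)..1, f τ) - (∫ τ in (-1+h:ℝ)..1, F τ)
      = ∫ τ in (-1+h:ℝ)..1, (f τ - F τ) := (intervalIntegral.integral_sub hIf2 hIF2).symm
  have htwo : (2:ℂ) * I0 = (∫ τ in (-1:ℝ)..(-1+h), f τ)
      + (∫ τ in (-1+h:ℝ)..1, (f τ - F τ)) - (∫ τ in (1:ℝ)..(1+h), F τ) := by
    rw [← hdiff]; linear_combination hsplit2 - hsplit1
  -- norm bounds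
  have habs1 : ‖∫ τ in (-1:ℝ)..(-1+h), f τ‖ ≤ 1 * |(-1+h) - (-1)| := by
    apply intervalIntegral.norm_integral_le_of_norm_le_const
    intro x _
    rw [hfdef]
    exact le_of_eq (aux_abs_exp_I_mul_ofReal b _)
  have habs3 : ‖∫ τ in (1:ℝ)..(1+h), F τ‖ ≤ 1 * |(1+h) - 1| := by
    apply intervalIntegral.norm_integral_le_of_norm_le_const
    intro x _
    exact le_of_eq (aux_abs_exp_I_mul_ofReal b _)
  have habs2 : ‖∫ τ in (-1+h:ℝ)..1, (f τ - F τ)‖ ≤ (C * b * h ^ β) * |1 - (-1+h)| := by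
    apply intervalIntegral.norm_integral_le_of_norm_le_const
    intro x hx
    rw [Set.uIoc_of_le (by linarith)] at hx
    have hx1 : x ∈ Set.Icc (-1:ℝ) 1 := ⟨by linarith [hx.1], hx.2⟩
    have hx2 : x - h ∈ Set.Icc (-1:ℝ) 1 := ⟨by linarith [hx.1], by linarith [hx.2]⟩
    have e1 : f x = Complex.exp (Complex.I * ((b * (ψ x + α * x) : ℝ):ℂ)) := by
      simp only [hfdef]; congr 1; push_cast; ring
    have e2 : F x = Complex.exp (Complex.I * ((b * (ψ (x - h) + α * x) : ℝ):ℂ)) := by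
      simp only [hFdef]; congr 1; push_cast; ring
    rw [e1, e2]
    calc ‖Complex.exp (Complex.I * ((b * (ψ x + α * x) : ℝ):ℂ))
          - Complex.exp (Complex.I * ((b * (ψ (x - h) + α * x) : ℝ):ℂ))‖
        ≤ |b * (ψ x + α * x) - b * (ψ (x - h) + α * x)| := aux_abs_exp_I_sub_exp_I _ _
      _ = b * |ψ x - ψ (x - h)| := by
          rw [show b * (ψ x + α * x) - b * (ψ (x - h) + α * x) = b * (ψ x - ψ (x-h)) by ring,
            abs_mul, _root_.abs_of_pos hb0]
      _ ≤ b * (C * |x - (x - h)| ^ β) := by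
          exact mul_le_mul_of_nonneg_left (hψ x hx1 (x-h) hx2) hb0.le
      _ = C * b * h ^ β := by
          rw [show x - (x - h) = h by ring, _root_.abs_of_pos hh0]; ring
  -- combine
  have hnorm2 : ‖(2:ℂ) * I0‖ = 2 * ‖I0‖ := by
    rw [norm_mul]; norm_num
  have hcomb : 2 * ‖I0‖ ≤ h + (C * b * h ^ β) * 2 + h := by
    rw [← hnorm2, htwo]
    have := norm_sub_le ((∫ τ in (-1:ℝ)..(-1+h), f τ) + (∫ τ in (-1+h:ℝ)..1, (f τ - F τ)))
      (∫ τ in (1:ℝ)..(1+h), F τ)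
    have h2 := norm_add_le (∫ τ in (-1:ℝ)..(-1+h), f τ) (∫ τ in (-1+h:ℝ)..1, (f τ - F τ))
    have e1 : |(-1+h) - (-1:ℝ)| = h := by
      rw [show (-1+h) - (-1:ℝ) = h by ring, _root_.abs_of_pos hh0]
    have e2 : |(1+h) - (1:ℝ)| = h := by
      rw [show (1+h) - (1:ℝ) = h by ring, _root_.abs_of_pos hh0]
    have e3 : |1 - (-1+h:ℝ)| ≤ 2 := by
      rw [_root_.abs_of_nonneg (by linarith)]; linarith
    have hb2' : (C * b * h ^ β) * |1 - (-1+h:ℝ)| ≤ (C * b * h ^ β) * 2 :=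
      mul_le_mul_of_nonneg_left e3 (by positivity)
    rw [e1] at habs1
    rw [e2] at habs3
    calc ‖_ - _‖ ≤ _ := this
      _ ≤ h + (C * b * h ^ β) * 2 + h := by linarith [le_trans habs2 hb2']
  have hI0abs : ‖I0‖ ≤ h + C * b * h ^ β := by linarith
  -- final rpow arithmetic
  have hpow : C * b * h ^ β ≤ C * Real.pi ^ β * b ^ (1 - 2*β) := by
    have h1 : h ^ β ≤ (Real.pi * b ^ (-2:ℝ)) ^ β := Real.rpow_le_rpow hh0.le hhb hβ0.le
    have h2 : (Real.pi * b ^ (-2:ℝ)) ^ β = Real.pi ^ β * b ^ ((-2) * β) := by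
      rw [Real.mul_rpow Real.pi_pos.le (Real.rpow_nonneg hb0.le _), ← Real.rpow_mul hb0.le]
    have h3 : b * b ^ ((-2) * β) = b ^ (1 - 2*β) := by
      rw [show (1 - 2*β) = 1 + (-2)*β by ring, Real.rpow_add hb0, Real.rpow_one]
    calc C * b * h ^ β ≤ C * b * (Real.pi ^ β * b ^ ((-2)*β)) := by
          apply mul_le_mul_of_nonneg_left (le_trans h1 (le_of_eq h2)) (by positivity)
      _ = C * Real.pi ^ β * (b * b ^ ((-2)*β)) := by ring
      _ = C * Real.pi ^ β * b ^ (1 - 2*β) := by rw [h3]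
  calc ‖(∫ τ in (-1:ℝ)..1, f τ)‖ = ‖I0‖ := rfl
    _ ≤ h + C * b * h ^ β := hI0abs
    _ ≤ Real.pi * b ^ (-2:ℝ) + C * Real.pi ^ β * b ^ (1 - 2*β) := add_le_add hhb hpow


lemma aux_interval_conj (g : ℝ → ℂ) (a b : ℝ) :
    ∫ x in a..b, (starRingEnd ℂ) (g x) = (starRingEnd ℂ) (∫ x in a..b, g x) := by
  simp only [intervalIntegral]
  rw [integral_conj, integral_conj, ← map_sub]

theorem oscillatory_integral_large_linear_phase
    (β C ρ : ℝ) (hβ : 1 / 2 < β) (hβ1 : β < 1) (hC : 0 < C)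
    (hρ0 : 0 < ρ) (hρ : ρ < 2 * β - 1) :
    ∃ b₀ : ℝ, 0 < b₀ ∧
      ∀ ψ : ℝ → ℝ,
        (∀ τ ∈ Set.Icc (-1 : ℝ) 1, ∀ τ' ∈ Set.Icc (-1 : ℝ) 1,
          |ψ τ - ψ τ'| ≤ C * |τ - τ'| ^ β) →
        ∀ b : ℝ, b₀ ≤ b → ∀ α : ℝ, b ≤ |α| →
          ‖(∫ τ in (-1 : ℝ)..1,
              Complex.exp (Complex.I * (b : ℂ) * ((ψ τ + α * τ : ℝ) : ℂ)))‖
            < b ^ (-ρ) := by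
  have hβ0 : (0:ℝ) < β := by linarith
  -- the comparison function tends to 0
  have t1 : Tendsto (fun b : ℝ => b ^ (ρ - 2)) atTop (nhds 0) := by
    have := tendsto_rpow_neg_atTop (y := 2 - ρ) (by linarith)
    simpa [show -(2 - ρ) = ρ - 2 by ring] using this
  have t2 : Tendsto (fun b : ℝ => b ^ (ρ + 1 - 2 * β)) atTop (nhds 0) := by
    have := tendsto_rpow_neg_atTop (y := 2 * β - 1 - ρ) (by linarith)
    simpa [show -(2 * β - 1 - ρ) = ρ + 1 - 2 * β by ring] using this
  have hG : Tendsto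
      (fun b : ℝ => Real.pi * b ^ (ρ - 2) + C * Real.pi ^ β * b ^ (ρ + 1 - 2 * β))
      atTop (nhds 0) := by
    have := (t1.const_mul Real.pi).add (t2.const_mul (C * Real.pi ^ β))
    simpa using this
  obtain ⟨N, hN⟩ := eventually_atTop.mp (hG.eventually_lt_const one_pos)
  refine ⟨max N 2, lt_of_lt_of_le two_pos (le_max_right N 2), ?_⟩
  intro ψ hψ b hb α hα
  have hb2 : 2 ≤ b := le_trans (le_max_right N 2) hb
  have hbN : N ≤ b := le_trans (le_max_left N 2) hb
  have hb0 : (0:ℝ) < b := by linarith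
  -- main numeric comparison
  have hM : Real.pi * b ^ (-2:ℝ) + C * Real.pi ^ β * b ^ (1 - 2 * β) < b ^ (-ρ) := by
    have h1 : b ^ (-2:ℝ) = b ^ (ρ - 2) * b ^ (-ρ) := by
      rw [← Real.rpow_add hb0]; ring_nf
    have h2 : b ^ (1 - 2 * β) = b ^ (ρ + 1 - 2 * β) * b ^ (-ρ) := by
      rw [← Real.rpow_add hb0]; ring_nf
    have h4 : (0:ℝ) < b ^ (-ρ) := Real.rpow_pos_of_pos hb0 _
    have h3 := hN b hbN
    calc Real.pi * b ^ (-2:ℝ) + C * Real.pi ^ β * b ^ (1 - 2 * β)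
        = (Real.pi * b ^ (ρ - 2) + C * Real.pi ^ β * b ^ (ρ + 1 - 2 * β)) * b ^ (-ρ) := by
          rw [h1, h2]; ring
      _ < 1 * b ^ (-ρ) := mul_lt_mul_of_pos_right h3 h4
      _ = b ^ (-ρ) := one_mul _
  rcases le_or_gt 0 α with hα0 | hα0
  · have hα' : b ≤ α := by rwa [_root_.abs_of_nonneg hα0] at hα
    exact lt_of_le_of_lt (aux_key_bound β C hβ0 hC ψ hψ b α hb2 hα') hM
  · have hα' : b ≤ -α := by rwa [_root_.abs_of_neg hα0] at hα
    have hψ' : ∀ τ ∈ Set.Icc (-1:ℝ) 1, ∀ τ' ∈ Set.Icc (-1:ℝ) 1,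
        |(fun t => -ψ t) τ - (fun t => -ψ t) τ'| ≤ C * |τ - τ'| ^ β := by
      intro τ hτ τ' hτ'
      simp only
      rw [show -ψ τ - -ψ τ' = -(ψ τ - ψ τ') by ring, abs_neg]
      exact hψ τ hτ τ' hτ'
    have hpt : ∀ τ : ℝ,
        Complex.exp (Complex.I * (b:ℂ) * (((fun t => -ψ t) τ + (-α) * τ : ℝ):ℂ))
          = (starRingEnd ℂ) (Complex.exp (Complex.I * (b:ℂ) * ((ψ τ + α * τ : ℝ):ℂ))) := by
      intro τ
      rw [← Complex.exp_conj]
      congr 1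
      simp only [map_mul, Complex.conj_I, Complex.conj_ofReal]
      push_cast
      ring
    have e1 : (∫ τ in (-1:ℝ)..1,
          Complex.exp (Complex.I * (b:ℂ) * (((fun t => -ψ t) τ + (-α) * τ : ℝ):ℂ)))
        = (starRingEnd ℂ) (∫ τ in (-1:ℝ)..1,
            Complex.exp (Complex.I * (b:ℂ) * ((ψ τ + α * τ : ℝ):ℂ))) := by
      rw [← aux_interval_conj]
      apply intervalIntegral.integral_congr
      intro x _
      exact hpt x
    have := aux_key_bound β C hβ0 hC (fun t => -ψ t) hψ' b (-α) hb2 hα'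
    rw [e1, Complex.norm_conj] at this
    exact lt_of_le_of_lt this hM

end
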